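/- The cardinal 𝔦(meager), defined as the least cardinality of a non-meager independent family on ω, satisfies non(meager) ≤ 𝔦(meager) ≤ cof(meager). -/

import Mathlib

open Set
open scoped Classical

abbrev XX : Type := ℕ → Bool

abbrev Code : Type := Σ n : ℕ, ((Fin n → Bool) → Bool)

noncomputable instance : Denumerable Code :=
  Denumerable.ofEncodableOfInfinite Code

noncomputable irreducible_def codeEquiv : ℕ ≃ Code := (Denumerable.eqv Code).symm

/-- the level of a position -/
noncomputable def lvl (m : ℕ) : ℕ := (codeEquiv m).1

lemma lvl_symm (c : Code) : lvl (codeEquiv.symm c) = c.1 := by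
  rw [lvl, Equiv.apply_symm_apply]

/-- the positions of level `n`, as a finset -/
noncomputable def Block (n : ℕ) : Finset ℕ :=
  (Finset.univ : Finset ((Fin n → Bool) → Bool)).image
    (fun φ => codeEquiv.symm ⟨n, φ⟩)

lemma mem_Block_iff {m n : ℕ} : m ∈ Block n ↔ lvl m = n := by
  constructor
  · rintro hm
    simp only [Block, Finset.mem_image] at hm
    obtain ⟨φ, -, rfl⟩ := hm
    exact lvl_symm _
  · intro h
    cases h
    simp only [Block, Finset.mem_image]
    refine ⟨(codeEquiv m).2, Finset.mem_univ _, ?_⟩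
    rw [show (⟨lvl m, (codeEquiv m).2⟩ : Code) = codeEquiv m from rfl]
    exact codeEquiv.symm_apply_apply m

/-- the template function of a real -/
noncomputable def template (r : XX) (m : ℕ) : Bool :=
  (codeEquiv m).2 (fun i => r i.val)

lemma template_symm (r : XX) (c : Code) :
    template r (codeEquiv.symm c) = c.2 (fun i => r i.val) := by
  rw [template]
  have h : codeEquiv (codeEquiv.symm c) = c := codeEquiv.apply_symm_apply c
  exact congrArg (fun d : Code => d.2 (fun i => r i.val)) h

/-- solution lemma -/
lemma template_solution (F : Finset XX) (ρ : XX → XX) (b : XX → Bool) (n : ℕ)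
    (hsep : ∀ x ∈ F, ∀ y ∈ F, x ≠ y → ∃ i < n, ρ x i ≠ ρ y i) :
    ∃ m, lvl m = n ∧ ∀ x ∈ F, template (ρ x) m = b x := by
  classical
  set φ : (Fin n → Bool) → Bool := fun u =>
    if h : ∃ x ∈ F, (fun i : Fin n => ρ x i.val) = u then b h.choose else false with hφ
  refine ⟨codeEquiv.symm ⟨n, φ⟩, lvl_symm _, ?_⟩
  intro x hx
  rw [template_symm]
  show φ (fun i : Fin n => ρ x i.val) = b x
  simp only [hφ]
  have hex : ∃ y ∈ F, (fun i : Fin n => ρ y i.val) = (fun i : Fin n => ρ x i.val) := ⟨x, hx, rfl⟩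
  rw [dif_pos hex]
  have hy := hex.choose_spec
  by_contra hne
  have hxy : hex.choose ≠ x := fun h => hne (by rw [h])
  obtain ⟨i, hi, hne'⟩ := hsep _ hy.1 x hx hxy
  have := congrFun hy.2 ⟨i, hi⟩
  simp only at this
  exact hne' this

def Cyl (D : Finset ℕ) (v : ℕ → Bool) : Set XX := {x | ∀ i ∈ D, x i = v i}

lemma isOpen_Cyl (D : Finset ℕ) (v : ℕ → Bool) : IsOpen (Cyl D v) := by
  have : Cyl D v = ⋂ i ∈ D, (fun x : XX => x i) ⁻¹' {v i} := by
    ext x; simp [Cyl]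
  rw [this]
  exact isOpen_biInter_finset (fun i _ => (continuous_apply i).isOpen_preimage _ (by simp))

lemma mem_Cyl_self (D : Finset ℕ) (v : ℕ → Bool) : v ∈ Cyl D v := fun _ _ => rfl

lemma Cyl_mono {D D' : Finset ℕ} {v v' : ℕ → Bool} (h : D ⊆ D')
    (hv : ∀ i ∈ D, v' i = v i) : Cyl D' v' ⊆ Cyl D v := by
  intro x hx i hi
  rw [hx i (h hi), hv i hi]

/-- basic escape lemma for closed sets with empty interior -/
lemma escape (F : Set XX) (hF : IsClosed F) (hint : interior F = ∅)
    (D : Finset ℕ) (v : ℕ → Bool) :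
    ∃ (D' : Finset ℕ) (v' : ℕ → Bool), D ⊆ D' ∧ (∀ i ∈ D, v' i = v i) ∧
      Cyl D' v' ∩ F = ∅ := by
  have hd : Dense Fᶜ := interior_eq_empty_iff_dense_compl.mp hint
  obtain ⟨y, hy1, hy2⟩ := hd.inter_open_nonempty (Cyl D v) (isOpen_Cyl D v)
    ⟨v, mem_Cyl_self D v⟩
  obtain ⟨I, u, hu, hsub⟩ := isOpen_pi_iff.mp hF.isOpen_compl y hy2
  refine ⟨D ∪ I, y, Finset.subset_union_left, fun i hi => hy1 i hi, ?_⟩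
  rw [eq_empty_iff_forall_notMem]
  rintro x ⟨hx1, hx2⟩
  have : x ∈ (I : Set ℕ).pi u := by
    intro i hi
    rw [hx1 i (Finset.mem_union_right _ hi)]
    exact (hu i hi).2
  exact (hsub this) hx2

lemma int_empty_union {A B : Set XX} (hA : IsClosed A) (hiA : interior A = ∅)
    (hiB : interior B = ∅) : interior (A ∪ B) = ∅ := by
  have h1 : interior (A ∪ B) \ A ⊆ interior B := by
    apply interior_maximal
    · intro x hx
      rcases (interior_subset hx.1) with h | h
      · exact absurd h hx.2
      · exact h
    · exact isOpen_interior.sdiff hA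
  rw [hiB, subset_empty_iff, diff_eq_empty] at h1
  have h2 : interior (A ∪ B) ⊆ interior A := interior_maximal h1 isOpen_interior
  rw [hiA, subset_empty_iff] at h2
  exact h2

lemma int_empty_biUnion {α : Type*} [DecidableEq α] (s : Finset α) (f : α → Set XX)
    (hc : ∀ a ∈ s, IsClosed (f a)) (hi : ∀ a ∈ s, interior (f a) = ∅) :
    IsClosed (⋃ a ∈ s, f a) ∧ interior (⋃ a ∈ s, f a) = ∅ := by
  induction s using Finset.cons_induction with
  | empty => simp
  | cons a s ha ih =>
    rw [Finset.cons_eq_insert, Finset.set_biUnion_insert]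
    have ihs := ih (fun b hb => hc b (Finset.mem_cons_of_mem hb))
      (fun b hb => hi b (Finset.mem_cons_of_mem hb))
    exact ⟨(hc a (Finset.mem_cons_self a s)).union ihs.1,
      int_empty_union (hc a (Finset.mem_cons_self a s))
        (hi a (Finset.mem_cons_self a s)) ihs.2⟩

/-- overwrite map -/
def ow (K : Finset ℕ) (h : ℕ → Bool) (x : XX) : XX := fun i => if i ∈ K then h i else x i

lemma continuous_ow (K : Finset ℕ) (h : ℕ → Bool) : Continuous (ow K h) := by
  apply continuous_pi
  intro i
  by_cases hi : i ∈ K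
  · simp only [ow, hi, if_true]
    exact continuous_const
  · simp only [ow, hi, if_false]
    exact continuous_apply i

lemma int_empty_ow_preimage (F : Set XX) (hint : interior F = ∅)
    (K : Finset ℕ) (h : ℕ → Bool) : interior (ow K h ⁻¹' F) = ∅ := by
  by_contra hne
  obtain ⟨x₀, hx₀⟩ := nonempty_iff_ne_empty.mpr hne
  obtain ⟨I, u, hu, hsub⟩ := isOpen_pi_iff.mp isOpen_interior x₀ hx₀
  have hsub' : (I : Set ℕ).pi u ⊆ ow K h ⁻¹' F := hsub.trans interior_subset
  classical
  set w : ℕ → Bool := fun i => if i ∈ K then h i else x₀ i with hw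
  have hcyl : Cyl (I ∪ K) w ⊆ F := by
    intro z hz
    set y : XX := fun i => if i ∈ K then x₀ i else z i with hy
    have hy' : y ∈ (I : Set ℕ).pi u := by
      intro i hi
      by_cases hiK : i ∈ K
      · simp only [hy, hiK, if_true]
        exact (hu i hi).2
      · simp only [hy, hiK, if_false]
        have := hz i (Finset.mem_union_left _ hi)
        rw [this, hw]
        simp only [hiK, if_false]
        exact (hu i hi).2
    have hyF : ow K h y ∈ F := hsub' hy'
    have : ow K h y = z := by
      funext i
      by_cases hiK : i ∈ K
      · simp only [ow, hiK, if_true]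
        have := hz i (Finset.mem_union_right _ hiK)
        rw [this, hw]
        simp [hiK]
      · simp [ow, hy, hiK]
    rwa [this] at hyF
  have : (interior F).Nonempty :=
    ⟨w, interior_maximal hcyl (isOpen_Cyl _ _) (mem_Cyl_self _ _)⟩
  rw [hint] at this
  exact this.ne_empty rfl

/-- escape lemma with new coordinates avoiding a prescribed finite set -/
lemma fresh_escape (F : Set XX) (hF : IsClosed F) (hint : interior F = ∅)
    (D H : Finset ℕ) (v : ℕ → Bool) :
    ∃ (D' : Finset ℕ) (v' : ℕ → Bool), D ⊆ D' ∧ (∀ i ∈ D, v' i = v i) ∧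
      (∀ i ∈ D', i ∉ D → i ∉ H) ∧ Cyl D' v' ∩ F = ∅ := by
  classical
  set K : Finset ℕ := H \ D with hK
  set Hset : Finset (ℕ → Bool) :=
    (Finset.univ : Finset ({i // i ∈ K} → Bool)).image
      (fun u i => if hi : i ∈ K then u ⟨i, hi⟩ else false) with hHset
  set G : Set XX := F ∪ ⋃ h ∈ Hset, ow K h ⁻¹' F with hG
  have hGc : IsClosed G := by
    apply hF.union
    exact (int_empty_biUnion Hset _ (fun h _ => hF.preimage (continuous_ow K h))
      (fun h _ => int_empty_ow_preimage F hint K h)).1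
  have hGi : interior G = ∅ := by
    apply int_empty_union hF hint
    exact (int_empty_biUnion Hset _ (fun h _ => hF.preimage (continuous_ow K h))
      (fun h _ => int_empty_ow_preimage F hint K h)).2
  obtain ⟨D₁, v₁, hD₁, hv₁, hcyl⟩ := escape G hGc hGi D v
  refine ⟨D ∪ (D₁ \ K), v₁, Finset.subset_union_left, hv₁, ?_, ?_⟩
  · intro i hi hiD hiH
    rcases Finset.mem_union.mp hi with h | h
    · exact hiD h
    · exact (Finset.mem_sdiff.mp h).2 (Finset.mem_sdiff.mpr ⟨hiH, hiD⟩)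
  · rw [eq_empty_iff_forall_notMem]
    rintro x ⟨hx1, hx2⟩
    set h : ℕ → Bool := fun i => if i ∈ K then x i else false with hh
    have hhmem : h ∈ Hset := by
      rw [hHset]
      apply Finset.mem_image.mpr
      refine ⟨fun p => x p.val, Finset.mem_univ _, ?_⟩
      funext i
      by_cases hi : i ∈ K <;> simp [hh, hi]
    set y : XX := fun i => if i ∈ K then v₁ i else x i with hy
    have hymem : y ∈ Cyl D₁ v₁ := by
      intro i hi
      by_cases hiK : i ∈ K
      · simp [hy, hiK]
      · simp only [hy, hiK, if_false]
        exact hx1 i (Finset.mem_union_right _ (Finset.mem_sdiff.mpr ⟨hi, hiK⟩))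
    have hynG : y ∉ G := by
      intro hyG
      rw [eq_empty_iff_forall_notMem] at hcyl
      exact hcyl y ⟨hymem, hyG⟩
    apply hynG
    rw [hG]
    right
    refine mem_biUnion hhmem ?_
    show ow K h y ∈ F
    have : ow K h y = x := by
      funext i
      by_cases hiK : i ∈ K <;> simp [ow, hy, hh, hiK]
    rwa [this]

/-! ### The stage construction -/

noncomputable def lvls (D : Finset ℕ) : Finset ℕ := D.image lvl

structure StState where
  DE : Finset ℕ
  vE : ℕ → Bool
  DO : Finset ℕ
  vO : ℕ → Bool

def StInv (st : StState) : Prop := Disjoint (lvls st.DE) (lvls st.DO)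

def StStep (F : Set XX) (st st' : StState) : Prop :=
  st.DE ⊆ st'.DE ∧ (∀ i ∈ st.DE, st'.vE i = st.vE i) ∧
  st.DO ⊆ st'.DO ∧ (∀ i ∈ st.DO, st'.vO i = st.vO i) ∧
  Cyl st'.DE st'.vE ∩ F = ∅ ∧ Cyl st'.DO st'.vO ∩ F = ∅

lemma step_ex (F : Set XX) (hFc : IsClosed F) (hFi : interior F = ∅)
    (st : StState) (hinv : StInv st) :
    ∃ st', StInv st' ∧ StStep F st st' := by
  classical
  set H : Finset ℕ := (lvls (st.DE ∪ st.DO)).biUnion Block with hH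
  obtain ⟨DE', vE', hsub1, hval1, hfresh1, hcyl1⟩ := fresh_escape F hFc hFi st.DE H st.vE
  set H' : Finset ℕ := (lvls (DE' ∪ st.DO)).biUnion Block with hH'
  obtain ⟨DO', vO', hsub2, hval2, hfresh2, hcyl2⟩ := fresh_escape F hFc hFi st.DO H' st.vO
  refine ⟨⟨DE', vE', DO', vO'⟩, ?_, hsub1, hval1, hsub2, hval2, hcyl1, hcyl2⟩
  rw [StInv, Finset.disjoint_left]
  rintro n hnE hnO
  obtain ⟨m, hm, hlm⟩ := Finset.mem_image.mp hnE
  obtain ⟨m', hm', hlm'⟩ := Finset.mem_image.mp hnO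
  by_cases hm'old : m' ∈ st.DO
  · by_cases hmold : m ∈ st.DE
    · exact Finset.disjoint_left.mp hinv
        (Finset.mem_image.mpr ⟨m, hmold, hlm⟩) (Finset.mem_image.mpr ⟨m', hm'old, hlm'⟩)
    · apply hfresh1 m hm hmold
      rw [hH]
      apply Finset.mem_biUnion.mpr
      exact ⟨n, Finset.mem_image.mpr ⟨m', Finset.mem_union_right _ hm'old, hlm'⟩,
        mem_Block_iff.mpr hlm⟩
  · apply hfresh2 m' hm' hm'old
    rw [hH']
    apply Finset.mem_biUnion.mpr
    exact ⟨n, Finset.mem_image.mpr ⟨m, Finset.mem_union_left _ hm, hlm⟩,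
      mem_Block_iff.mpr hlm'⟩

section Stage

variable (F : ℕ → Set XX) (hFc : ∀ k, IsClosed (F k)) (hFi : ∀ k, interior (F k) = ∅)

noncomputable def stSeq : ℕ → {st : StState // StInv st}
  | 0 => ⟨⟨∅, fun _ => false, ∅, fun _ => false⟩, by simp [StInv, lvls]⟩
  | (k+1) =>
    ⟨(step_ex (F k) (hFc k) (hFi k) (stSeq k).1 (stSeq k).2).choose,
     (step_ex (F k) (hFc k) (hFi k) (stSeq k).1 (stSeq k).2).choose_spec.1⟩

lemma stSeq_step (k : ℕ) :
    StStep (F k) (stSeq F hFc hFi k).1 (stSeq F hFc hFi (k+1)).1 :=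
  (step_ex (F k) (hFc k) (hFi k) (stSeq F hFc hFi k).1 (stSeq F hFc hFi k).2).choose_spec.2

lemma stSeq_monoE {j k : ℕ} (h : j ≤ k) :
    (stSeq F hFc hFi j).1.DE ⊆ (stSeq F hFc hFi k).1.DE ∧
      ∀ i ∈ (stSeq F hFc hFi j).1.DE,
        (stSeq F hFc hFi k).1.vE i = (stSeq F hFc hFi j).1.vE i := by
  induction k with
  | zero => cases Nat.le_zero.mp h; exact ⟨subset_rfl, fun _ _ => rfl⟩
  | succ k ih =>
    rcases Nat.lt_or_ge j (k+1) with hlt | hge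
    · have hjk := Nat.lt_succ_iff.mp hlt
      obtain ⟨hs, hv⟩ := ih hjk
      obtain ⟨hs', hv', -, -, -, -⟩ := stSeq_step F hFc hFi k
      exact ⟨hs.trans hs', fun i hi => by rw [hv' i (hs hi), hv i hi]⟩
    · cases Nat.le_antisymm h hge
      exact ⟨subset_rfl, fun _ _ => rfl⟩

lemma stSeq_monoO {j k : ℕ} (h : j ≤ k) :
    (stSeq F hFc hFi j).1.DO ⊆ (stSeq F hFc hFi k).1.DO ∧
      ∀ i ∈ (stSeq F hFc hFi j).1.DO,
        (stSeq F hFc hFi k).1.vO i = (stSeq F hFc hFi j).1.vO i := by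
  induction k with
  | zero => cases Nat.le_zero.mp h; exact ⟨subset_rfl, fun _ _ => rfl⟩
  | succ k ih =>
    rcases Nat.lt_or_ge j (k+1) with hlt | hge
    · have hjk := Nat.lt_succ_iff.mp hlt
      obtain ⟨hs, hv⟩ := ih hjk
      obtain ⟨-, -, hs', hv', -, -⟩ := stSeq_step F hFc hFi k
      exact ⟨hs.trans hs', fun i hi => by rw [hv' i (hs hi), hv i hi]⟩
    · cases Nat.le_antisymm h hge
      exact ⟨subset_rfl, fun _ _ => rfl⟩

variable (t : XX)

noncomputable def limE : XX := fun m =>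
  if h : ∃ k, m ∈ (stSeq F hFc hFi k).1.DE
  then (stSeq F hFc hFi h.choose).1.vE m else t m

noncomputable def limO : XX := fun m =>
  if h : ∃ k, m ∈ (stSeq F hFc hFi k).1.DO
  then (stSeq F hFc hFi h.choose).1.vO m else t m

lemma limE_spec {k m : ℕ} (hm : m ∈ (stSeq F hFc hFi k).1.DE) :
    limE F hFc hFi t m = (stSeq F hFc hFi k).1.vE m := by
  have h : ∃ k, m ∈ (stSeq F hFc hFi k).1.DE := ⟨k, hm⟩
  rw [limE, dif_pos h]
  have h1 := stSeq_monoE F hFc hFi (Nat.le_max_left h.choose k)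
  have h2 := stSeq_monoE F hFc hFi (Nat.le_max_right h.choose k)
  rw [← h1.2 m h.choose_spec, h2.2 m hm]

lemma limO_spec {k m : ℕ} (hm : m ∈ (stSeq F hFc hFi k).1.DO) :
    limO F hFc hFi t m = (stSeq F hFc hFi k).1.vO m := by
  have h : ∃ k, m ∈ (stSeq F hFc hFi k).1.DO := ⟨k, hm⟩
  rw [limO, dif_pos h]
  have h1 := stSeq_monoO F hFc hFi (Nat.le_max_left h.choose k)
  have h2 := stSeq_monoO F hFc hFi (Nat.le_max_right h.choose k)
  rw [← h1.2 m h.choose_spec, h2.2 m hm]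

lemma limE_notmem (j : ℕ) : limE F hFc hFi t ∉ F j := by
  have hcyl : limE F hFc hFi t ∈ Cyl (stSeq F hFc hFi (j+1)).1.DE (stSeq F hFc hFi (j+1)).1.vE :=
    fun i hi => limE_spec F hFc hFi t hi
  have := (stSeq_step F hFc hFi j).2.2.2.2.1
  intro hF
  rw [eq_empty_iff_forall_notMem] at this
  exact this _ ⟨hcyl, hF⟩

lemma limO_notmem (j : ℕ) : limO F hFc hFi t ∉ F j := by
  have hcyl : limO F hFc hFi t ∈ Cyl (stSeq F hFc hFi (j+1)).1.DO (stSeq F hFc hFi (j+1)).1.vO :=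
    fun i hi => limO_spec F hFc hFi t hi
  have := (stSeq_step F hFc hFi j).2.2.2.2.2
  intro hF
  rw [eq_empty_iff_forall_notMem] at this
  exact this _ ⟨hcyl, hF⟩

/-- levels touched by the E-construction -/
def TE : Set ℕ := {n | ∃ k, n ∈ lvls (stSeq F hFc hFi k).1.DE}
def TO : Set ℕ := {n | ∃ k, n ∈ lvls (stSeq F hFc hFi k).1.DO}

lemma TE_TO_disjoint : TE F hFc hFi ∩ TO F hFc hFi = ∅ := by
  rw [eq_empty_iff_forall_notMem]
  rintro n ⟨⟨k1, h1⟩, ⟨k2, h2⟩⟩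
  obtain ⟨m, hm, hlm⟩ := Finset.mem_image.mp h1
  obtain ⟨m', hm', hlm'⟩ := Finset.mem_image.mp h2
  have hm2 := (stSeq_monoE F hFc hFi (Nat.le_max_left k1 k2)).1 hm
  have hm'2 := (stSeq_monoO F hFc hFi (Nat.le_max_right k1 k2)).1 hm'
  exact Finset.disjoint_left.mp (stSeq F hFc hFi (max k1 k2)).2
    (Finset.mem_image.mpr ⟨m, hm2, hlm⟩) (Finset.mem_image.mpr ⟨m', hm'2, hlm'⟩)

lemma limE_template {m : ℕ} (hm : lvl m ∉ TE F hFc hFi) : limE F hFc hFi t m = t m := by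
  rw [limE, dif_neg]
  rintro ⟨k, hk⟩
  exact hm ⟨k, Finset.mem_image.mpr ⟨m, hk, rfl⟩⟩

lemma limO_template {m : ℕ} (hm : lvl m ∉ TO F hFc hFi) : limO F hFc hFi t m = t m := by
  rw [limO, dif_neg]
  rintro ⟨k, hk⟩
  exact hm ⟨k, Finset.mem_image.mpr ⟨m, hk, rfl⟩⟩

end Stage

/-- The main stage lemma. -/
lemma stage (𝒞 : Set (Set ℕ))
    (h𝒞 : ∀ G : Finset (Set ℕ), ↑G ⊆ 𝒞 → (⋂ c ∈ G, c).Infinite)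
    (N : Set XX) (hN : IsMeagre N) (t : XX) :
    ∃ (x : XX) (C : Set ℕ), x ∉ N ∧ (∀ m : ℕ, lvl m ∈ C → x m = t m) ∧
      ∀ G : Finset (Set ℕ), ↑G ⊆ 𝒞 → (C ∩ ⋂ c ∈ G, c).Infinite := by
  classical
  -- get a countable cover of N by closed sets with empty interior
  obtain ⟨S, hSnwd, hScnt, hScov⟩ := isMeagre_iff_countable_union_isNowhereDense.mp hN
  obtain ⟨F, hFc, hFi, hNF⟩ :
      ∃ F : ℕ → Set XX, (∀ k, IsClosed (F k)) ∧ (∀ k, interior (F k) = ∅) ∧ N ⊆ ⋃ k, F k := by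
    rcases S.eq_empty_or_nonempty with rfl | hSne
    · exact ⟨fun _ => ∅, fun _ => isClosed_empty, fun _ => interior_empty, by
        simpa using hScov⟩
    · obtain ⟨f, hf⟩ := Set.Countable.exists_eq_range hScnt hSne
      refine ⟨fun k => closure (f k), fun _ => isClosed_closure, ?_, ?_⟩
      · intro k
        have : f k ∈ S := by rw [hf]; exact mem_range_self k
        exact hSnwd _ this
      · refine hScov.trans ?_
        intro x hx
        obtain ⟨s, hsS, hxs⟩ := hx
        rw [hf] at hsS
        obtain ⟨k, rfl⟩ := hsS
        exact mem_iUnion.mpr ⟨k, subset_closure hxs⟩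
  -- the two candidate limits
  set xE := limE F hFc hFi t
  set xO := limO F hFc hFi t
  have hxEN : xE ∉ N := fun h => by
    obtain ⟨k, hk⟩ := mem_iUnion.mp (hNF h)
    exact limE_notmem F hFc hFi t k hk
  have hxON : xO ∉ N := fun h => by
    obtain ⟨k, hk⟩ := mem_iUnion.mp (hNF h)
    exact limO_notmem F hFc hFi t k hk
  by_cases hE : ∀ G : Finset (Set ℕ), ↑G ⊆ 𝒞 → ((TE F hFc hFi)ᶜ ∩ ⋂ c ∈ G, c).Infinite
  · exact ⟨xE, (TE F hFc hFi)ᶜ, hxEN,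
      fun m hm => limE_template F hFc hFi t hm, hE⟩
  · push_neg at hE
    obtain ⟨G₁, hG₁, hG₁fin⟩ := hE
    refine ⟨xO, (TO F hFc hFi)ᶜ, hxON,
      fun m hm => limO_template F hFc hFi t hm, ?_⟩
    intro G hG
    by_contra hfin
    rw [Set.not_infinite] at hfin
    have hsub : (⋂ c ∈ (G₁ ∪ G), c) ⊆
        ((TE F hFc hFi)ᶜ ∩ ⋂ c ∈ G₁, c) ∪ ((TO F hFc hFi)ᶜ ∩ ⋂ c ∈ G, c) := by
      intro n hn
      have hn1 : n ∈ ⋂ c ∈ G₁, c := by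
        simp only [mem_iInter] at hn ⊢
        exact fun c hc => hn c (Finset.mem_union_left _ hc)
      have hn2 : n ∈ ⋂ c ∈ G, c := by
        simp only [mem_iInter] at hn ⊢
        exact fun c hc => hn c (Finset.mem_union_right _ hc)
      by_cases hnT : n ∈ TE F hFc hFi
      · right
        refine ⟨?_, hn2⟩
        intro hnO
        have := TE_TO_disjoint F hFc hFi
        rw [eq_empty_iff_forall_notMem] at this
        exact this n ⟨hnT, hnO⟩
      · exact Or.inl ⟨hnT, hn1⟩
    have : (⋂ c ∈ (G₁ ∪ G), c).Finite := (hG₁fin.union hfin).subset hsub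
    exact (h𝒞 (G₁ ∪ G) (by
      rw [Finset.coe_union]
      exact union_subset hG₁ hG)) this

def IndepFamily (A : Set (ℕ → Bool)) : Prop :=
  ∀ F : Finset (ℕ → Bool), ↑F ⊆ A → F.Nonempty → ∀ ν : (ℕ → Bool) → Bool,
    {m : ℕ | ∀ x ∈ F, x m = ν x}.Infinite

/-! ### The transfinite construction -/

lemma finset_max_rel {α : Type*} (r : α → α → Prop) [IsTrichotomous α r] [IsTrans α r]
    (T : Finset α) (h : T.Nonempty) : ∃ m ∈ T, ∀ t ∈ T, r t m ∨ t = m := by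
  classical
  induction T using Finset.cons_induction with
  | empty => exact absurd h (by simp)
  | cons a s ha ih =>
    rcases s.eq_empty_or_nonempty with rfl | hs
    · refine ⟨a, Finset.mem_cons_self a _, ?_⟩
      intro t ht
      right
      simpa using ht
    · obtain ⟨m, hm, hmax⟩ := ih hs
      rcases trichotomous_of r a m with hr | rfl | hr
      · refine ⟨m, Finset.mem_cons_of_mem hm, ?_⟩
        intro t ht
        rcases Finset.mem_cons.mp ht with rfl | ht'
        · exact Or.inl hr
        · exact hmax t ht'
      · exact absurd hm ha
      · refine ⟨a, Finset.mem_cons_self a _, ?_⟩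
        intro t ht
        rcases Finset.mem_cons.mp ht with rfl | ht'
        · exact Or.inr rfl
        · rcases hmax t ht' with h' | rfl
          · exact Or.inl (_root_.trans h' hr)
          · exact Or.inl hr

section Main

variable (M₀ : Set (Set XX)) (hmeag : ∀ s ∈ M₀, IsMeagre s) (emb : ↥M₀ ↪ XX)

noncomputable def fBody (s : ↥M₀)
    (prev : ∀ t : ↥M₀, WellOrderingRel t s → XX × Set ℕ) : XX × Set ℕ :=
  if h : ∀ G : Finset (Set ℕ),
      ↑G ⊆ {c | ∃ t : ↥M₀, ∃ _ : WellOrderingRel t s, (prev t ‹_›).2 = c} →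
      (⋂ c ∈ G, c).Infinite
  then ⟨(stage _ h s.1 (hmeag s.1 s.2) (template (emb s))).choose,
        (stage _ h s.1 (hmeag s.1 s.2) (template (emb s))).choose_spec.choose⟩
  else ⟨fun _ => false, ∅⟩

noncomputable def fRec : ↥M₀ → XX × Set ℕ :=
  (IsWellFounded.wf (r := @WellOrderingRel ↥M₀)).fix (fBody M₀ hmeag emb)

lemma fRec_eq (s : ↥M₀) :
    fRec M₀ hmeag emb s = fBody M₀ hmeag emb s (fun t _ => fRec M₀ hmeag emb t) :=
  WellFounded.fix_eq _ _ s

/-- the sets of second components below / up to a stage -/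
def prevC (s : ↥M₀) : Set (Set ℕ) :=
  {c | ∃ t : ↥M₀, ∃ _ : WellOrderingRel t s, (fRec M₀ hmeag emb t).2 = c}

def prevCeq (s : ↥M₀) : Set (Set ℕ) :=
  {c | ∃ t : ↥M₀, (WellOrderingRel t s ∨ t = s) ∧ (fRec M₀ hmeag emb t).2 = c}

/-- key induction: all finite intersections of the chosen sets are infinite -/
lemma fRec_sfip : ∀ s : ↥M₀, ∀ G : Finset (Set ℕ),
    ↑G ⊆ prevCeq M₀ hmeag emb s → (⋂ c ∈ G, c).Infinite := by
  intro s
  induction s using (IsWellFounded.wf (r := @WellOrderingRel ↥M₀)).induction with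
  | _ s IH =>
  -- first: SFIP for strictly-previous sets
  have hprev : ∀ G : Finset (Set ℕ), ↑G ⊆ prevC M₀ hmeag emb s → (⋂ c ∈ G, c).Infinite := by
    intro G hG
    rcases G.eq_empty_or_nonempty with rfl | hGne
    · simpa using Set.infinite_univ
    · -- pick witnesses and take the maximal one
      have hw : ∀ c ∈ G, ∃ t : ↥M₀, WellOrderingRel t s ∧ (fRec M₀ hmeag emb t).2 = c := by
        intro c hc
        obtain ⟨t, ht, htc⟩ := hG hc
        exact ⟨t, ht, htc⟩
      choose wt hwt1 hwt2 using hw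
      set T : Finset ↥M₀ := G.attach.image (fun c => wt c.1 c.2) with hT
      have hTne : T.Nonempty := (Finset.Nonempty.image (by simpa using hGne) _)
      obtain ⟨tm, htmT, htmax⟩ := finset_max_rel WellOrderingRel T hTne
      have htm : WellOrderingRel tm s := by
        obtain ⟨c, -, rfl⟩ := Finset.mem_image.mp htmT
        exact hwt1 _ _
      apply IH tm htm
      intro c hc
      refine ⟨wt c hc, ?_, hwt2 c hc⟩
      have : wt c hc ∈ T := Finset.mem_image.mpr ⟨⟨c, hc⟩, Finset.mem_attach _ _, rfl⟩
      exact htmax _ this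
  -- the dite in fRec s takes the positive branch, giving the stage properties
  have hcond : ∀ G : Finset (Set ℕ),
      ↑G ⊆ {c | ∃ t : ↥M₀, ∃ _ : WellOrderingRel t s,
        ((fun t _ => fRec M₀ hmeag emb t) t ‹_›).2 = c} →
      (⋂ c ∈ G, c).Infinite := hprev
  have hfs : fRec M₀ hmeag emb s =
      ⟨(stage _ hcond s.1 (hmeag s.1 s.2) (template (emb s))).choose,
       (stage _ hcond s.1 (hmeag s.1 s.2) (template (emb s))).choose_spec.choose⟩ := by
    rw [fRec_eq, fBody, dif_pos hcond]
  have hstage := (stage _ hcond s.1 (hmeag s.1 s.2) (template (emb s))).choose_spec.choose_spec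
  -- now prove the claim for G ⊆ prevCeq s
  intro G hG
  set Cs := (fRec M₀ hmeag emb s).2 with hCs
  set G' := G.erase Cs with hG'
  have hG'sub : ↑G' ⊆ prevC M₀ hmeag emb s := by
    intro c hc
    obtain ⟨hcne, hcG⟩ := Finset.mem_erase.mp hc
    obtain ⟨t, hts, htc⟩ := hG hcG
    rcases hts with ht | rfl
    · exact ⟨t, ht, htc⟩
    · exact absurd (hCs.trans htc).symm hcne
  have hpos : (Cs ∩ ⋂ c ∈ G', c).Infinite := by
    have := hstage.2.2 G' hG'sub
    rw [hCs, hfs]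
    exact this
  apply hpos.mono
  intro n hn
  simp only [mem_iInter]
  intro c hc
  rcases eq_or_ne c Cs with rfl | hne
  · exact hn.1
  · have hcG' : c ∈ G' := Finset.mem_erase.mpr ⟨hne, hc⟩
    exact mem_iInter.mp (mem_iInter.mp hn.2 c) hcG'

lemma fRec_props (s : ↥M₀) :
    (fRec M₀ hmeag emb s).1 ∉ s.1 ∧
    (∀ m : ℕ, lvl m ∈ (fRec M₀ hmeag emb s).2 →
      (fRec M₀ hmeag emb s).1 m = template (emb s) m) ∧
    (∀ G : Finset (Set ℕ), ↑G ⊆ prevC M₀ hmeag emb s →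
      ((fRec M₀ hmeag emb s).2 ∩ ⋂ c ∈ G, c).Infinite) := by
  have hcond : ∀ G : Finset (Set ℕ),
      ↑G ⊆ {c | ∃ t : ↥M₀, ∃ _ : WellOrderingRel t s,
        ((fun t _ => fRec M₀ hmeag emb t) t ‹_›).2 = c} →
      (⋂ c ∈ G, c).Infinite := by
    intro G hG
    apply fRec_sfip M₀ hmeag emb s G
    intro c hc
    obtain ⟨t, ht, htc⟩ := hG hc
    exact ⟨t, Or.inl ht, htc⟩
  have hfs : fRec M₀ hmeag emb s =
      ⟨(stage _ hcond s.1 (hmeag s.1 s.2) (template (emb s))).choose,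
       (stage _ hcond s.1 (hmeag s.1 s.2) (template (emb s))).choose_spec.choose⟩ := by
    rw [fRec_eq, fBody, dif_pos hcond]
  have hstage := (stage _ hcond s.1 (hmeag s.1 s.2) (template (emb s))).choose_spec.choose_spec
  rw [hfs]
  exact ⟨hstage.1, hstage.2.1, hstage.2.2⟩

lemma fRec_sfip_all (G : Finset (Set ℕ))
    (hG : ↑G ⊆ {c | ∃ t : ↥M₀, (fRec M₀ hmeag emb t).2 = c}) :
    (⋂ c ∈ G, c).Infinite := by
  classical
  rcases G.eq_empty_or_nonempty with rfl | hGne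
  · simpa using Set.infinite_univ
  · have hw : ∀ c ∈ G, ∃ t : ↥M₀, (fRec M₀ hmeag emb t).2 = c := fun c hc => hG hc
    choose wt hwt using hw
    set T : Finset ↥M₀ := G.attach.image (fun c => wt c.1 c.2) with hT
    have hTne : T.Nonempty := (Finset.Nonempty.image (by simpa using hGne) _)
    obtain ⟨tm, htmT, htmax⟩ := finset_max_rel WellOrderingRel T hTne
    apply fRec_sfip M₀ hmeag emb tm G
    intro c hc
    refine ⟨wt c hc, ?_, hwt c hc⟩
    have : wt c hc ∈ T := Finset.mem_image.mpr ⟨⟨c, hc⟩, Finset.mem_attach _ _, rfl⟩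
    exact htmax _ this

end Main

/-- The main construction: from a cofinal family of meager sets that embeds into `2^ω`,
we get a non-meager independent family of no larger cardinality. -/
lemma main_construction (M₀ : Set (Set XX)) (hmeag : ∀ s ∈ M₀, IsMeagre s)
    (hcof : ∀ N : Set XX, IsMeagre N → ∃ s ∈ M₀, N ⊆ s) (emb : ↥M₀ ↪ XX) :
    ∃ A : Set XX, IndepFamily A ∧ ¬ IsMeagre A ∧ Cardinal.mk ↥A ≤ Cardinal.mk ↥M₀ := by
  classical
  set g : ↥M₀ → XX := fun s => (fRec M₀ hmeag emb s).1 with hg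
  set A : Set XX := Set.range g with hA
  refine ⟨A, ?_, ?_, Cardinal.mk_range_le⟩
  · -- independence
    intro F hF _hne ν
    -- witnesses
    have hwex : ∀ x ∈ F, ∃ s : ↥M₀, g s = x := fun x hx => hF hx
    have hMne : Nonempty ↥M₀ := by
      obtain ⟨s, hs, -⟩ := hcof ∅ IsMeagre.empty
      exact ⟨⟨s, hs⟩⟩
    set w : XX → ↥M₀ := fun x =>
      if h : ∃ s : ↥M₀, g s = x then h.choose else Classical.choice hMne with hwdef
    have hw : ∀ x ∈ F, g (w x) = x := by
      intro x hx
      have h : ∃ s : ↥M₀, g s = x := hwex x hx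
      rw [hwdef]
      simp only [dif_pos h]
      exact h.choose_spec
    have hwinj : ∀ x ∈ F, ∀ y ∈ F, x ≠ y → w x ≠ w y := by
      intro x hx y hy hxy he
      exact hxy (by rw [← hw x hx, ← hw y hy, he])
    -- separation bound
    set n₀ : ℕ := (F ×ˢ F).sup (fun p =>
      if h : ∃ i, (emb (w p.1)) i ≠ (emb (w p.2)) i then h.choose + 1 else 0) with hn₀
    have hsep : ∀ n ≥ n₀, ∀ x ∈ F, ∀ y ∈ F, x ≠ y →
        ∃ i < n, (emb (w x)) i ≠ (emb (w y)) i := by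
      intro n hn x hx y hy hxy
      have hembne : emb (w x) ≠ emb (w y) := fun h => hwinj x hx y hy hxy (emb.injective h)
      have hex : ∃ i, (emb (w x)) i ≠ (emb (w y)) i := by
        by_contra hc
        push_neg at hc
        exact hembne (funext hc)
      refine ⟨hex.choose, ?_, hex.choose_spec⟩
      have hle := Finset.le_sup (f := fun p : XX × XX =>
        if h : ∃ i, (emb (w p.1)) i ≠ (emb (w p.2)) i then h.choose + 1 else 0)
        ((Finset.mem_product (p := (x, y))).mpr ⟨hx, hy⟩)
      simp only [dif_pos hex] at hle
      rw [← hn₀] at hle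
      omega
    -- the sets C over F
    set G : Finset (Set ℕ) := F.attach.image (fun x => (fRec M₀ hmeag emb (w x.1)).2) with hG
    have hGsub : ↑G ⊆ {c | ∃ t : ↥M₀, (fRec M₀ hmeag emb t).2 = c} := by
      intro c hc
      obtain ⟨x, -, rfl⟩ := Finset.mem_image.mp hc
      exact ⟨w x.1, rfl⟩
    have hLinf : (⋂ c ∈ G, c).Infinite := fRec_sfip_all M₀ hmeag emb G hGsub
    set L : Set ℕ := (⋂ c ∈ G, c) ∩ {n | n₀ ≤ n} with hL
    have hLinf' : L.Infinite := by
      have : (⋂ c ∈ G, c) \ {n | n < n₀} ⊆ L := by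
        intro n hn
        exact ⟨hn.1, by simpa using hn.2⟩
      exact ((hLinf.diff (Set.finite_lt_nat n₀)).mono this)
    -- for each level in L there is a position realizing the pattern
    have hkey : ∀ n ∈ L, ∃ m, lvl m = n ∧ ∀ x ∈ F, x m = ν x := by
      intro n hnL
      obtain ⟨m, hml, hmt⟩ := template_solution F (fun x => emb (w x)) ν n
        (fun x hx y hy hxy => hsep n hnL.2 x hx y hy hxy)
      refine ⟨m, hml, ?_⟩
      intro x hx
      have hx' : x = g (w x) := (hw x hx).symm
      have hC : lvl m ∈ (fRec M₀ hmeag emb (w x)).2 := by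
        rw [hml]
        have : (fRec M₀ hmeag emb (w x)).2 ∈ G :=
          Finset.mem_image.mpr ⟨⟨x, hx⟩, Finset.mem_attach _ _, rfl⟩
        exact mem_iInter.mp (mem_iInter.mp hnL.1 _) this
      calc x m = g (w x) m := by rw [hw x hx]
        _ = (fRec M₀ hmeag emb (w x)).1 m := rfl
        _ = template (emb (w x)) m := (fRec_props M₀ hmeag emb (w x)).2.1 m hC
        _ = ν x := hmt x hx
    -- conclude infinitude
    have hLne : Nonempty ↥L := hLinf'.nonempty.to_subtype
    haveI : Infinite ↥L := hLinf'.to_subtype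
    apply Set.infinite_of_injective_forall_mem
      (f := fun n : ↥L => (hkey n.1 n.2).choose)
    · intro n n' hnn
      have h1 := (hkey n.1 n.2).choose_spec.1
      have h2 := (hkey n'.1 n'.2).choose_spec.1
      have hnn' : (hkey n.1 n.2).choose = (hkey n'.1 n'.2).choose := hnn
      apply Subtype.ext
      rw [← h1, ← h2, hnn']
    · intro n
      exact (hkey n.1 n.2).choose_spec.2
  · -- non-meagerness
    intro hAm
    obtain ⟨s, hs, hsub⟩ := hcof A hAm
    exact (fRec_props M₀ hmeag emb ⟨s, hs⟩).1 (hsub ⟨⟨s, hs⟩, rfl⟩)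

/-! ### A cofinal family of meager sets of size at most continuum -/

lemma closed_embeds_in_sets : ∃ inj : {s : Set XX // IsClosed s} → Set ℕ,
    Function.Injective inj := by
  obtain ⟨b, hbc, hbne', hbasis⟩ := TopologicalSpace.exists_countable_basis XX
  have hbne : b.Nonempty := by
    rcases b.eq_empty_or_nonempty with rfl | h
    · exfalso
      have := hbasis.open_eq_sUnion' (isOpen_univ (X := XX))
      have hx : (fun _ => false : XX) ∈ (univ : Set XX) := mem_univ _
      rw [this] at hx
      obtain ⟨u, hu, -⟩ := hx
      exact absurd hu.1 (notMem_empty u)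
    · exact h
  obtain ⟨f, hf⟩ := Set.Countable.exists_eq_range hbc hbne
  refine ⟨fun s => {n | f n ⊆ (s.1)ᶜ}, ?_⟩
  intro s t hst
  have hst' : {n | f n ⊆ (s.1)ᶜ} = {n | f n ⊆ (t.1)ᶜ} := hst
  have hkey : ∀ u : {s : Set XX // IsClosed s}, (u.1)ᶜ = ⋃₀ {v ∈ b | v ⊆ (u.1)ᶜ} :=
    fun u => hbasis.open_eq_sUnion' u.2.isOpen_compl
  have hs : {v ∈ b | v ⊆ (s.1)ᶜ} = {v ∈ b | v ⊆ (t.1)ᶜ} := by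
    ext v
    simp only [mem_setOf_eq, hf, mem_range]
    constructor
    · rintro ⟨⟨n, rfl⟩, hv⟩
      have h2 : n ∈ {n | f n ⊆ (s.1)ᶜ} := hv
      have h3 : n ∈ {n | f n ⊆ (t.1)ᶜ} := hst' ▸ h2
      exact ⟨⟨n, rfl⟩, h3⟩
    · rintro ⟨⟨n, rfl⟩, hv⟩
      have h2 : n ∈ {n | f n ⊆ (t.1)ᶜ} := hv
      have h3 : n ∈ {n | f n ⊆ (s.1)ᶜ} := hst'.symm ▸ h2
      exact ⟨⟨n, rfl⟩, h3⟩
  apply Subtype.ext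
  have : (s.1)ᶜ = (t.1)ᶜ := by rw [hkey s, hkey t, hs]
  exact compl_injective this

lemma small_cofinal_family : ∃ 𝔉 : Set (Set XX), (∀ s ∈ 𝔉, IsMeagre s) ∧
    (∀ N : Set XX, IsMeagre N → ∃ s ∈ 𝔉, N ⊆ s) ∧
    Cardinal.mk ↥𝔉 ≤ Cardinal.mk XX := by
  classical
  set CN := {s : Set XX // IsClosed s ∧ interior s = ∅} with hCN
  set Φ : (ℕ → CN) → Set XX := fun g => ⋃ k, (g k).1 with hΦ
  refine ⟨Set.range Φ, ?_, ?_, ?_⟩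
  · rintro s ⟨g, rfl⟩
    apply isMeagre_iff_countable_union_isNowhereDense.mpr
    refine ⟨Set.range (fun k => (g k).1), ?_, countable_range _, by rw [sUnion_range]⟩
    rintro t ⟨k, rfl⟩
    exact ((g k).2.1).isNowhereDense_iff.mpr (g k).2.2
  · intro N hN
    obtain ⟨S, hSnwd, hScnt, hScov⟩ := isMeagre_iff_countable_union_isNowhereDense.mp hN
    rcases S.eq_empty_or_nonempty with rfl | hSne
    · refine ⟨Φ (fun _ => ⟨∅, isClosed_empty, interior_empty⟩), ⟨_, rfl⟩, ?_⟩
      refine hScov.trans ?_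
      simp
    · obtain ⟨f, hf⟩ := Set.Countable.exists_eq_range hScnt hSne
      refine ⟨Φ (fun k => ⟨closure (f k), isClosed_closure, ?_⟩), ⟨_, rfl⟩, ?_⟩
      · have : f k ∈ S := by rw [hf]; exact mem_range_self k
        have hnwd := hSnwd _ this
        rwa [IsNowhereDense] at hnwd
      · refine hScov.trans ?_
        intro x hx
        obtain ⟨s, hsS, hxs⟩ := hx
        rw [hf] at hsS
        obtain ⟨k, rfl⟩ := hsS
        exact mem_iUnion.mpr ⟨k, subset_closure hxs⟩
  · -- cardinality
    refine le_trans Cardinal.mk_range_le ?_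
    obtain ⟨inj, hinj⟩ := closed_embeds_in_sets
    have h1 : Cardinal.mk CN ≤ Cardinal.mk (Set ℕ) := by
      refine le_trans ?_ (Cardinal.mk_le_of_injective hinj)
      refine Cardinal.mk_le_of_injective
        (f := fun s : CN => (⟨s.1, s.2.1⟩ : {s : Set XX // IsClosed s})) ?_
      intro a b hab
      apply Subtype.ext
      exact congrArg (fun u : {s : Set XX // IsClosed s} => u.val) hab
    calc Cardinal.mk (ℕ → CN) = Cardinal.mk CN ^ Cardinal.aleph0 := by
          rw [← Cardinal.mk_nat]
          exact (Cardinal.power_def _ _).symm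
      _ ≤ Cardinal.mk (Set ℕ) ^ Cardinal.aleph0 := by
          exact Cardinal.power_le_power_right h1
      _ = (2 ^ Cardinal.aleph0) ^ Cardinal.aleph0 := by
          rw [Cardinal.mk_set, Cardinal.mk_nat]
      _ = 2 ^ Cardinal.aleph0 := by
          rw [← Cardinal.power_mul, Cardinal.aleph0_mul_aleph0]
      _ = Cardinal.mk XX := by
          rw [← Cardinal.mk_nat, ← Cardinal.mk_bool]
          exact Cardinal.power_def _ _

/-- The uniformity `non(meager)` of the meager ideal on `2^ω`. -/
noncomputable def nonMeager : Cardinal :=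
  sInf { c | ∃ S : Set (ℕ → Bool), Cardinal.mk S = c ∧ ¬ IsMeagre S }

/-- The cofinality `cof(meager)` of the meager ideal on `2^ω`. -/
noncomputable def cofMeager : Cardinal :=
  sInf { c | ∃ M : Set (Set (ℕ → Bool)), Cardinal.mk M = c ∧ (∀ s ∈ M, IsMeagre s) ∧
    ∀ N : Set (ℕ → Bool), IsMeagre N → ∃ s ∈ M, N ⊆ s }

/-- `𝔦(meager)`: the least cardinality of a non-meager independent family. -/
noncomputable def iMeager : Cardinal :=
  sInf { c | ∃ A : Set (ℕ → Bool), Cardinal.mk A = c ∧ IndepFamily A ∧ ¬ IsMeagre A }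

theorem nonMeager_le_iMeager_le_cofMeager :
    nonMeager ≤ iMeager ∧ iMeager ≤ cofMeager := by
  classical
  obtain ⟨𝔉, h𝔉meag, h𝔉cof, h𝔉card⟩ := small_cofinal_family
  set cofSet := { c | ∃ M : Set (Set (ℕ → Bool)), Cardinal.mk M = c ∧ (∀ s ∈ M, IsMeagre s) ∧
    ∀ N : Set (ℕ → Bool), IsMeagre N → ∃ s ∈ M, N ⊆ s } with hcofSet
  have h𝔉mem : Cardinal.mk ↥𝔉 ∈ cofSet := ⟨𝔉, rfl, h𝔉meag, h𝔉cof⟩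
  have hcofne : cofSet.Nonempty := ⟨_, h𝔉mem⟩
  have hmem : cofMeager ∈ cofSet := csInf_mem hcofne
  obtain ⟨M₀, hM₀card, hM₀meag, hM₀cof⟩ := hmem
  have hcard : Cardinal.mk ↥M₀ ≤ Cardinal.mk XX := by
    rw [hM₀card]
    calc cofMeager ≤ Cardinal.mk ↥𝔉 := csInf_le (OrderBot.bddBelow _) h𝔉mem
      _ ≤ Cardinal.mk XX := h𝔉card
  obtain ⟨embM⟩ := (Cardinal.le_def _ _).mp hcard
  obtain ⟨A, hAind, hAnm, hAcard⟩ := main_construction M₀ hM₀meag hM₀cof embM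
  set iSet := { c | ∃ A : Set (ℕ → Bool), Cardinal.mk A = c ∧ IndepFamily A ∧ ¬ IsMeagre A }
    with hiSet
  have hiMem : Cardinal.mk ↥A ∈ iSet := ⟨A, rfl, hAind, hAnm⟩
  constructor
  · -- nonMeager ≤ iMeager
    have hiInf : iMeager ∈ iSet := csInf_mem ⟨_, hiMem⟩
    obtain ⟨A₀, hA₀card, -, hA₀nm⟩ := hiInf
    exact csInf_le (OrderBot.bddBelow _) ⟨A₀, hA₀card, hA₀nm⟩
  · -- iMeager ≤ cofMeager
    have h1 : iMeager ≤ Cardinal.mk ↥A := csInf_le (OrderBot.bddBelow _) hiMem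
    have h2 : Cardinal.mk ↥A ≤ cofMeager := by
      rw [← hM₀card]
      exact hAcard
    exact h1.trans h2
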